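/- arXiv:0807.1810 — 4 statements merged into one kernel-verified Lean document; each statement's English description precedes it below -/
import Mathlib

section
/- Let V ⊂ H be Hilbert spaces with dual pairing ⟨·,·⟩, ℋ an intermediate Banach space, and B : V × V → V' a bilinear continuous map satisfying the antisymmetry ⟨B(u₁,u₂),u₃⟩ = −⟨B(u₁,u₃),u₂⟩. Then the following two conditions are equivalent: (a) for every η > 0 there exists C_η > 0 such that |⟨B(u₁,u₂),u₃⟩| ≤ η‖u₃‖² + C_η ‖u₁‖²_ℋ ‖u₂‖²_ℋ for all u₁,u₂,u₃ ∈ V; (b) there exists C > 0 such that |⟨B(u₁,u₂),u₃⟩| ≤ C ‖u₁‖_ℋ ‖u₂‖ ‖u₃‖_ℋ for all u₁,u₂,u₃ ∈ V. -/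
/- Abstract Gelfand-triple setting: `V` with its norm `‖·‖`, intermediate-space
norm `nHH` (the `ℋ`-norm), and the pairing `⟨B(u₁,u₂),u₃⟩` realized as a
continuous trilinear form `B`. -/
theorem stmt_0 {V : Type*} [NormedAddCommGroup V] [NormedSpace ℝ V]
    (nHH : V → ℝ)
    (hHH0 : ∀ v, 0 ≤ nHH v)
    (hHHsmul : ∀ (c : ℝ) (v : V), nHH (c • v) = |c| * nHH v)
    (B : V →ₗ[ℝ] V →ₗ[ℝ] V →ₗ[ℝ] ℝ)
    (hBcont : Continuous fun p : V × V × V => B p.1 p.2.1 p.2.2)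
    (hanti : ∀ u₁ u₂ u₃ : V, B u₁ u₂ u₃ = - B u₁ u₃ u₂) :
    (∀ η > (0:ℝ), ∃ Cη > (0:ℝ), ∀ u₁ u₂ u₃ : V,
        |B u₁ u₂ u₃| ≤ η * ‖u₃‖ ^ 2 + Cη * nHH u₁ ^ 2 * nHH u₂ ^ 2)
    ↔ (∃ C > (0:ℝ), ∀ u₁ u₂ u₃ : V,
        |B u₁ u₂ u₃| ≤ C * nHH u₁ * ‖u₂‖ * nHH u₃) := by
  constructor
  · intro h
    obtain ⟨C, hC, hCb⟩ := h 1 one_pos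
    refine ⟨1 + C, by linarith, fun u₁ u₂ u₃ => ?_⟩
    -- switch second and third arguments
    have habs : |B u₁ u₂ u₃| = |B u₁ u₃ u₂| := by rw [hanti, abs_neg]
    set a : ℝ := nHH u₁ * nHH u₃ with ha
    set b : ℝ := ‖u₂‖ with hb
    have ha0 : 0 ≤ a := mul_nonneg (hHH0 u₁) (hHH0 u₃)
    have hb0 : 0 ≤ b := norm_nonneg u₂
    have key : ∀ s t : ℝ, 0 < s → 0 < t →
        |B u₁ u₃ u₂| ≤ (t / s) * b ^ 2 + C * (s / t) * a ^ 2 := by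
      intro s t hs ht
      have h1 := hCb (s • u₁) u₃ (t • u₂)
      simp only [map_smul, LinearMap.smul_apply, smul_eq_mul, hHHsmul, norm_smul,
        Real.norm_eq_abs, one_mul] at h1
      rw [abs_mul, abs_mul, abs_of_pos ht, abs_of_pos hs] at h1
      have h2 : s * t * |B u₁ u₃ u₂| ≤ t ^ 2 * b ^ 2 + C * s ^ 2 * a ^ 2 := by
        calc s * t * |B u₁ u₃ u₂| = t * (s * |B u₁ u₃ u₂|) := by ring
        _ ≤ (t * ‖u₂‖) ^ 2 + C * (s * nHH u₁) ^ 2 * nHH u₃ ^ 2 := h1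
        _ = t ^ 2 * b ^ 2 + C * s ^ 2 * a ^ 2 := by
            rw [ha, hb]; ring
      have hst : 0 < s * t := mul_pos hs ht
      have h3 : s * t * ((t / s) * b ^ 2 + C * (s / t) * a ^ 2)
          = t ^ 2 * b ^ 2 + C * s ^ 2 * a ^ 2 := by
        field_simp
      exact le_of_mul_le_mul_left (h2.trans_eq h3.symm) hst
    rw [habs]
    rcases eq_or_lt_of_le hb0 with hb' | hb'
    · -- ‖u₂‖ = 0, so u₂ = 0
      have hz : u₂ = 0 := norm_eq_zero.mp hb'.symm
      rw [hz]
      simp only [map_zero, abs_zero]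
      rw [← hb']
      nlinarith [hHH0 u₁, hHH0 u₃, hC]
    rcases eq_or_lt_of_le ha0 with ha' | ha'
    · -- a = 0 : let s → ∞
      have hle : |B u₁ u₃ u₂| ≤ 0 := by
        by_contra hpos
        push_neg at hpos
        have hXne : |B u₁ u₃ u₂| ≠ 0 := ne_of_gt hpos
        have hbne : b ≠ 0 := ne_of_gt hb'
        have hk := key (2 * b ^ 2 / |B u₁ u₃ u₂|) 1 (by positivity) one_pos
        rw [← ha'] at hk
        have he : (1 : ℝ) / (2 * b ^ 2 / |B u₁ u₃ u₂|) * b ^ 2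
            + C * (2 * b ^ 2 / |B u₁ u₃ u₂| / 1) * 0 ^ 2
            = |B u₁ u₃ u₂| / 2 := by
          field_simp
          ring
        rw [he] at hk
        linarith
      calc |B u₁ u₃ u₂| ≤ 0 := hle
      _ = (1 + C) * nHH u₁ * ‖u₂‖ * nHH u₃ := by
          rcases mul_eq_zero.mp ha'.symm with h0 | h0 <;> rw [h0] <;> ring
    · -- a > 0, b > 0 : choose s = b, t = a
      have hk := key b a hb' ha'
      have he : (a / b) * b ^ 2 + C * (b / a) * a ^ 2 = (1 + C) * a * b := by
        field_simp
      rw [he] at hk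
      calc |B u₁ u₃ u₂| ≤ (1 + C) * a * b := hk
      _ = (1 + C) * nHH u₁ * ‖u₂‖ * nHH u₃ := by rw [ha, hb]; ring
  · rintro ⟨C, hC, hCb⟩ η hη
    refine ⟨C ^ 2 / (4 * η), by positivity, fun u₁ u₂ u₃ => ?_⟩
    have habs : |B u₁ u₂ u₃| = |B u₁ u₃ u₂| := by rw [hanti, abs_neg]
    have h1 := hCb u₁ u₃ u₂
    rw [habs]
    have hD : C ^ 2 / (4 * η) * (4 * η) = C ^ 2 :=
      div_mul_cancel₀ _ (by positivity)
    have h2 : C * nHH u₁ * ‖u₃‖ * nHH u₂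
        ≤ η * ‖u₃‖ ^ 2 + C ^ 2 / (4 * η) * nHH u₁ ^ 2 * nHH u₂ ^ 2 := by
      have h4 : 4 * η * (C * nHH u₁ * ‖u₃‖ * nHH u₂)
          ≤ 4 * η * (η * ‖u₃‖ ^ 2 + C ^ 2 / (4 * η) * nHH u₁ ^ 2 * nHH u₂ ^ 2) := by
        have expand : 4 * η * (η * ‖u₃‖ ^ 2 + C ^ 2 / (4 * η) * nHH u₁ ^ 2 * nHH u₂ ^ 2)
            = 4 * η ^ 2 * ‖u₃‖ ^ 2 + C ^ 2 * nHH u₁ ^ 2 * nHH u₂ ^ 2 := by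
          field_simp
        rw [expand]
        nlinarith [sq_nonneg (2 * η * ‖u₃‖ - C * (nHH u₁ * nHH u₂))]
      exact le_of_mul_le_mul_left h4 (by positivity)
    linarith
end

section
/- Under the assumptions of condition (C1) (bilinearity, antisymmetry of B, the interpolation inequality ‖v‖²_ℋ ≤ a₀|v|‖v‖, and the bound |⟨B(u₁,u₂),u₃⟩| ≤ C‖u₁‖_ℋ‖u₂‖‖u₃‖_ℋ), for every η > 0 there exists C_η > 0 such that for all u₁,u₂ ∈ V, |⟨B(u₁,u₁) − B(u₂,u₂), u₁ − u₂⟩| ≤ η‖u₁−u₂‖² + C_η |u₁−u₂|² ‖u₂‖⁴_ℋ. -/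
/- Condition (C1) setting; `B(u) := B(u,u)`; conclusion is inequality (2.9)
of the paper: |⟨B(u₁)−B(u₂), u₁−u₂⟩| ≤ η‖u₁−u₂‖² + C_η |u₁−u₂|² ‖u₂‖_ℋ⁴. -/
theorem stmt_2 {V : Type*} [NormedAddCommGroup V] [NormedSpace ℝ V]
    (nH nHH : V → ℝ) (a₀ C : ℝ) (ha₀ : 0 < a₀) (hC : 0 < C)
    (hH0 : ∀ v, 0 ≤ nH v) (hHH0 : ∀ v, 0 ≤ nHH v)
    (hinterp : ∀ v : V, nHH v ^ 2 ≤ a₀ * nH v * ‖v‖)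
    (B : V →ₗ[ℝ] V →ₗ[ℝ] V →ₗ[ℝ] ℝ)
    (hanti : ∀ u₁ u₂ u₃ : V, B u₁ u₂ u₃ = - B u₁ u₃ u₂)
    (hbound : ∀ u₁ u₂ u₃ : V, |B u₁ u₂ u₃| ≤ C * nHH u₁ * ‖u₂‖ * nHH u₃) :
    ∀ η > (0:ℝ), ∃ Cη > (0:ℝ), ∀ u₁ u₂ : V,
      |B u₁ u₁ (u₁ - u₂) - B u₂ u₂ (u₁ - u₂)|
        ≤ η * ‖u₁ - u₂‖ ^ 2 + Cη * nH (u₁ - u₂) ^ 2 * nHH u₂ ^ 4 := by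
  intro η hη
  refine ⟨C ^ 4 * a₀ ^ 2 / (4 * η ^ 3), by positivity, fun u₁ u₂ => ?_⟩
  set w : V := u₁ - u₂ with hw
  have hzero : ∀ x y : V, B x y y = 0 := fun x y => by
    have := hanti x y y; linarith
  -- key algebraic identity
  have hE : B u₁ u₁ w - B u₂ u₂ w = -(B w w u₂) := by
    have e1 := hzero u₁ u₁
    have e2 := hzero u₂ u₂
    have e3 := hanti u₂ u₁ u₂
    have e4 := hzero u₂ u₂
    simp only [hw, map_sub, LinearMap.sub_apply]
    have e5 := hzero u₁ u₂
    linarith [hanti u₂ u₁ u₂]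
  rw [hE, abs_neg]
  set E := |B w w u₂| with hEdef
  have hEnn : 0 ≤ E := abs_nonneg _
  set s := ‖w‖ with hs
  set t := nH w with ht
  set r := nHH u₂ with hr
  set m := nHH w with hm
  have hsnn : 0 ≤ s := norm_nonneg _
  have htnn : 0 ≤ t := hH0 _
  have hrnn : 0 ≤ r := hHH0 _
  have hmnn : 0 ≤ m := hHH0 _
  have hb : E ≤ C * m * s * r := hbound w w u₂
  have hi : m ^ 2 ≤ a₀ * t * s := hinterp w
  rcases le_or_gt E (η * s ^ 2) with hcase | hcase
  · have : 0 ≤ C ^ 4 * a₀ ^ 2 / (4 * η ^ 3) * t ^ 2 * r ^ 4 := by positivity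
    linarith
  · -- E > η s² : then s > 0
    have hspos : 0 < s := by
      rcases lt_or_eq_of_le hsnn with h | h
      · exact h
      · exfalso
        have h1 : C * m * s * r = 0 := by rw [← h]; ring
        have h2 : η * s ^ 2 = 0 := by rw [← h]; ring
        linarith
    -- E² ≤ C² a₀ t s³ r²
    have hsq : E ^ 2 ≤ C ^ 2 * a₀ * t * s ^ 3 * r ^ 2 := by
      have h1 : E ^ 2 ≤ (C * m * s * r) ^ 2 := by
        have := mul_self_le_mul_self hEnn hb
        nlinarith
      nlinarith [mul_nonneg (mul_nonneg (sq_nonneg C) (sq_nonneg s)) (sq_nonneg r)]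
    -- η s² E ≤ C² a₀ t s³ r²
    have hkey : η * s ^ 2 * E ≤ C ^ 2 * a₀ * t * s ^ 3 * r ^ 2 := by nlinarith
    -- conclude
    rw [div_mul_eq_mul_div, div_mul_eq_mul_div, ← sub_le_iff_le_add',
      le_div_iff₀ (by positivity : (0:ℝ) < 4 * η ^ 3)]
    nlinarith [sq_nonneg (2 * η ^ 2 * s - C ^ 2 * a₀ * t * r ^ 2),
      mul_pos hspos hspos, sq_nonneg s, mul_nonneg hsnn hsnn,
      mul_nonneg (mul_nonneg (sq_nonneg (2 * η ^ 2 * s - C ^ 2 * a₀ * t * r ^ 2)) hsnn) hsnn]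
end

section
/- For the GOY shell model bilinear map B on H = {complex sequences u with Σ|uₙ|² < ∞}, defined by [B(u,v)]ₙ = −i(a k_{n+1} u*_{n+1} v*_{n+2} + b kₙ u*_{n−1} v*_{n+1} − a k_{n−1} u*_{n−1} v*_{n−2} − b k_{n−1} u*_{n−2} v*_{n−1}) with kₙ = k₀μⁿ, the trilinear form ⟨B(u,v),w⟩ = Re Σₙ [B(u,v)]ₙ w*ₙ satisfies the bound |⟨B(u,v),w⟩| ≤ C |u| |A^{1/2}v| |w| for all u,w ∈ H and v ∈ Dom(A^{1/2}), where (Au)ₙ = ν kₙ² uₙ. -/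
/- GOY shell model. Sequences are indexed so that shell `n ≥ 1` sits at index
`n`, with the convention `u 0 = 0` (standing for `u₀ = u₋₁ = 0`; negative
indices become `0` by truncated subtraction, where the coefficient multiplies
a vanishing factor). `k n = k₀ μⁿ`. -/
noncomputable def goyB (k₀ μ a b : ℝ) (u v : ℕ → ℂ) (n : ℕ) : ℂ :=
  -Complex.I *
    ((↑(a * (k₀ * μ ^ (n+1))) : ℂ) * (starRingEnd ℂ) (u (n+1)) * (starRingEnd ℂ) (v (n+2))
      + (↑(b * (k₀ * μ ^ n)) : ℂ) * (starRingEnd ℂ) (u (n-1)) * (starRingEnd ℂ) (v (n+1))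
      - (↑(a * (k₀ * μ ^ (n-1))) : ℂ) * (starRingEnd ℂ) (u (n-1)) * (starRingEnd ℂ) (v (n-2))
      - (↑(b * (k₀ * μ ^ (n-1))) : ℂ) * (starRingEnd ℂ) (u (n-2)) * (starRingEnd ℂ) (v (n-1)))

/- `⟨B(u,v),w⟩ = Re Σ_{n≥1} [B(u,v)]ₙ w*ₙ`. -/
noncomputable def goyForm (k₀ μ a b : ℝ) (u v w : ℕ → ℂ) : ℝ :=
  (∑' n : ℕ, goyB k₀ μ a b u v (n+1) * (starRingEnd ℂ) (w (n+1))).re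


lemma cs_tsum (f g : ℕ → ℝ) (hf0 : ∀ n, 0 ≤ f n) (hg0 : ∀ n, 0 ≤ g n)
    (hf : Summable (fun n => f n ^ 2)) (hg : Summable (fun n => g n ^ 2)) :
    Summable (fun n => f n * g n) ∧
      ∑' n, f n * g n ≤ Real.sqrt (∑' n, f n ^ 2) * Real.sqrt (∑' n, g n ^ 2) := by
  have hsum : Summable (fun n => f n * g n) := by
    apply Summable.of_nonneg_of_le (fun n => mul_nonneg (hf0 n) (hg0 n))
      (fun n => ?_) ((hf.add hg).mul_left (1/2 : ℝ))
    nlinarith [sq_nonneg (f n - g n)]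
  refine ⟨hsum, Summable.tsum_le_of_sum_le hsum fun s => ?_⟩
  have h1 : (∑ i ∈ s, f i * g i) ^ 2 ≤ (∑ i ∈ s, f i ^ 2) * (∑ i ∈ s, g i ^ 2) :=
    Finset.sum_mul_sq_le_sq_mul_sq s f g
  have h2 : (∑ i ∈ s, f i ^ 2) ≤ ∑' n, f n ^ 2 := Summable.sum_le_tsum s (fun i _ => sq_nonneg _) hf
  have h3 : (∑ i ∈ s, g i ^ 2) ≤ ∑' n, g n ^ 2 := Summable.sum_le_tsum s (fun i _ => sq_nonneg _) hg
  have h0 : (0:ℝ) ≤ ∑ i ∈ s, f i * g i :=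
    Finset.sum_nonneg fun i _ => mul_nonneg (hf0 i) (hg0 i)
  have h4 : (0:ℝ) ≤ ∑ i ∈ s, g i ^ 2 := Finset.sum_nonneg fun i _ => sq_nonneg _
  have h5 : (0:ℝ) ≤ ∑' n, f n ^ 2 := tsum_nonneg fun n => sq_nonneg _
  calc (∑ i ∈ s, f i * g i) = Real.sqrt ((∑ i ∈ s, f i * g i) ^ 2) :=
        (Real.sqrt_sq h0).symm
    _ ≤ Real.sqrt ((∑' n, f n ^ 2) * (∑' n, g n ^ 2)) :=
        Real.sqrt_le_sqrt (h1.trans (mul_le_mul h2 h3 h4 h5))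
    _ = _ := Real.sqrt_mul h5 _

lemma tsum_shift_le (f : ℕ → ℝ) (hf0 : ∀ n, 0 ≤ f n) (hf : Summable f) (k : ℕ) :
    ∑' n, f (n + k) ≤ ∑' n, f n :=
  Summable.tsum_le_tsum_of_inj (· + k) (add_left_injective k) (fun c _ => hf0 c) (fun _ => le_rfl)
    ((summable_nat_add_iff k).2 hf) hf

lemma tsum_pred_le (f : ℕ → ℝ) (hf0 : f 0 = 0) (hf : Summable f) :
    Summable (fun n => f (n - 1)) ∧ ∑' n, f (n - 1) ≤ ∑' n, f n := by
  have hs : Summable (fun n => f (n - 1)) := by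
    rw [← summable_nat_add_iff 1]
    simpa using hf
  refine ⟨hs, ?_⟩
  rw [Summable.tsum_eq_zero_add hs]
  simp [hf0]

lemma triple_tsum (p q r : ℕ → ℝ) (U V W : ℝ)
    (hp0 : ∀ n, 0 ≤ p n) (hq0 : ∀ n, 0 ≤ q n) (hr0 : ∀ n, 0 ≤ r n)
    (hpU : ∀ n, p n ≤ U)
    (hq : Summable (fun n => q n ^ 2)) (hr : Summable (fun n => r n ^ 2))
    (hV : Real.sqrt (∑' n, q n ^ 2) ≤ V) (hW : Real.sqrt (∑' n, r n ^ 2) ≤ W) :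
    Summable (fun n => p n * q n * r n) ∧
      ∑' n, p n * q n * r n ≤ U * V * W := by
  obtain ⟨hqr, hqr_le⟩ := cs_tsum q r hq0 hr0 hq hr
  have hU0 : 0 ≤ U := le_trans (hp0 0) (hpU 0)
  have hV0 : 0 ≤ V := le_trans (Real.sqrt_nonneg _) hV
  have hW0 : 0 ≤ W := le_trans (Real.sqrt_nonneg _) hW
  have hle : ∀ n, p n * q n * r n ≤ U * (q n * r n) := fun n => by
    have h1 := hpU n
    have h2 := mul_nonneg (hq0 n) (hr0 n)
    nlinarith
  have h0 : ∀ n, 0 ≤ p n * q n * r n := fun n =>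
    mul_nonneg (mul_nonneg (hp0 n) (hq0 n)) (hr0 n)
  have hsum : Summable (fun n => p n * q n * r n) :=
    Summable.of_nonneg_of_le h0 hle (hqr.mul_left U)
  refine ⟨hsum, ?_⟩
  calc ∑' n, p n * q n * r n ≤ ∑' n, U * (q n * r n) :=
        Summable.tsum_le_tsum hle hsum (hqr.mul_left U)
    _ = U * ∑' n, q n * r n := tsum_mul_left
    _ ≤ U * (Real.sqrt (∑' n, q n ^ 2) * Real.sqrt (∑' n, r n ^ 2)) :=
        mul_le_mul_of_nonneg_left hqr_le hU0
    _ ≤ U * (V * W) := by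
        apply mul_le_mul_of_nonneg_left _ hU0
        exact mul_le_mul hV hW (Real.sqrt_nonneg _) hV0
    _ = U * V * W := by ring

lemma coef_le (k₀ μ a b : ℝ) (hk₀ : 0 < k₀) (hμ : 1 < μ) {x : ℝ} (hx : x = |a| ∨ x = |b|)
    {j j' : ℕ} (hj : j ≤ j' + 1) :
    x * (k₀ * μ ^ j) ≤ ((|a| + |b| + 1) * μ) * (k₀ * μ ^ j') := by
  have hμ0 : (0:ℝ) < μ := lt_trans one_pos hμ
  have hx0 : 0 ≤ x ∧ x ≤ |a| + |b| + 1 := by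
    rcases hx with h | h <;> subst h <;>
      exact ⟨abs_nonneg _, by nlinarith [abs_nonneg a, abs_nonneg b]⟩
  have h1 : μ ^ j ≤ μ ^ (j' + 1) := pow_le_pow_right₀ hμ.le hj
  have h2 : μ ^ (j' + 1) = μ ^ j' * μ := pow_succ μ j'
  have h4 : x * μ ^ j ≤ (|a| + |b| + 1) * μ ^ (j' + 1) :=
    mul_le_mul hx0.2 h1 (pow_nonneg hμ0.le _) (by positivity)
  calc x * (k₀ * μ ^ j) = k₀ * (x * μ ^ j) := by ring
    _ ≤ k₀ * ((|a| + |b| + 1) * μ ^ (j' + 1)) := mul_le_mul_of_nonneg_left h4 hk₀.le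
    _ = (|a| + |b| + 1) * μ * (k₀ * μ ^ j') := by rw [h2]; ring


lemma goyB_norm_le (k₀ μ a b : ℝ) (hk₀ : 0 < k₀) (hμ : 1 < μ) (u v : ℕ → ℂ) (n : ℕ) :
    ‖goyB k₀ μ a b u v (n+1)‖ ≤ ((|a| + |b| + 1) * μ) *
      (‖u (n+2)‖ * (k₀ * μ ^ (n+3) * ‖v (n+3)‖)
        + ‖u n‖ * (k₀ * μ ^ (n+2) * ‖v (n+2)‖)
        + ‖u n‖ * (k₀ * μ ^ (n-1) * ‖v (n-1)‖)
        + ‖u (n-1)‖ * (k₀ * μ ^ n * ‖v n‖)) := by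
  set c : ℝ := (|a| + |b| + 1) * μ with hc
  have e1 : n + 1 - 1 = n := by omega
  have e2 : n + 1 - 2 = n - 1 := by omega
  have e3 : n + 1 + 1 = n + 2 := by omega
  have e4 : n + 1 + 2 = n + 3 := by omega
  have hμ0 : (0:ℝ) < μ := lt_trans one_pos hμ
  have hKpos : ∀ j : ℕ, (0:ℝ) < k₀ * μ ^ j := fun j => by positivity
  set T1 : ℂ := (↑(a * (k₀ * μ ^ (n+2))) : ℂ) * (starRingEnd ℂ) (u (n+2)) * (starRingEnd ℂ) (v (n+3)) with hT1
  set T2 : ℂ := (↑(b * (k₀ * μ ^ (n+1))) : ℂ) * (starRingEnd ℂ) (u n) * (starRingEnd ℂ) (v (n+2)) with hT2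
  set T3 : ℂ := (↑(a * (k₀ * μ ^ n)) : ℂ) * (starRingEnd ℂ) (u n) * (starRingEnd ℂ) (v (n-1)) with hT3
  set T4 : ℂ := (↑(b * (k₀ * μ ^ n)) : ℂ) * (starRingEnd ℂ) (u (n-1)) * (starRingEnd ℂ) (v n) with hT4
  have hgoy : goyB k₀ μ a b u v (n+1) = -Complex.I * (T1 + T2 - T3 - T4) := by
    rw [goyB, e1, e2, e3, e4]
  rw [hgoy]
  have hnorm : ‖-Complex.I * (T1 + T2 - T3 - T4)‖ ≤ ‖T1‖ + ‖T2‖ + ‖T3‖ + ‖T4‖ := by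
    rw [norm_mul, norm_neg, Complex.norm_I, one_mul]
    calc ‖T1 + T2 - T3 - T4‖ ≤ ‖T1 + T2 - T3‖ + ‖T4‖ := norm_sub_le _ _
      _ ≤ ‖T1 + T2‖ + ‖T3‖ + ‖T4‖ := by linarith [norm_sub_le (T1 + T2) T3]
      _ ≤ ‖T1‖ + ‖T2‖ + ‖T3‖ + ‖T4‖ := by linarith [norm_add_le T1 T2]
  have hTn : ∀ (x : ℝ) (j i l : ℕ),
      ‖(↑(x * (k₀ * μ ^ j)) : ℂ) * (starRingEnd ℂ) (u i) * (starRingEnd ℂ) (v l)‖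
        = |x| * (k₀ * μ ^ j) * (‖u i‖ * ‖v l‖) := by
    intro x j i l
    simp [map_mul, Complex.norm_conj, Complex.norm_real, Real.norm_eq_abs, abs_mul,
      abs_of_pos hk₀, abs_pow, abs_of_pos hμ0, mul_assoc]
  have habs0 : ∀ (i l : ℕ), (0:ℝ) ≤ ‖u i‖ * ‖v l‖ := fun i l =>
    mul_nonneg (norm_nonneg _) (norm_nonneg _)
  have hb1 : ‖T1‖ ≤ c * (‖u (n+2)‖ * (k₀ * μ ^ (n+3) * ‖v (n+3)‖)) := by
    rw [hT1, hTn]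
    exact (mul_le_mul_of_nonneg_right
      (coef_le k₀ μ a b hk₀ hμ (Or.inl rfl) (show n+2 ≤ (n+3)+1 by omega))
      (habs0 (n+2) (n+3))).trans_eq (by ring)
  have hb2 : ‖T2‖ ≤ c * (‖u n‖ * (k₀ * μ ^ (n+2) * ‖v (n+2)‖)) := by
    rw [hT2, hTn]
    exact (mul_le_mul_of_nonneg_right
      (coef_le k₀ μ a b hk₀ hμ (Or.inr rfl) (show n+1 ≤ (n+2)+1 by omega))
      (habs0 n (n+2))).trans_eq (by ring)
  have hb3 : ‖T3‖ ≤ c * (‖u n‖ * (k₀ * μ ^ (n-1) * ‖v (n-1)‖)) := by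
    rw [hT3, hTn]
    exact (mul_le_mul_of_nonneg_right
      (coef_le k₀ μ a b hk₀ hμ (Or.inl rfl) (show n ≤ (n-1)+1 by omega))
      (habs0 n (n-1))).trans_eq (by ring)
  have hb4 : ‖T4‖ ≤ c * (‖u (n-1)‖ * (k₀ * μ ^ n * ‖v n‖)) := by
    rw [hT4, hTn]
    exact (mul_le_mul_of_nonneg_right
      (coef_le k₀ μ a b hk₀ hμ (Or.inr rfl) (show n ≤ n+1 by omega))
      (habs0 (n-1) n)).trans_eq (by ring)
  calc ‖-Complex.I * (T1 + T2 - T3 - T4)‖ ≤ ‖T1‖ + ‖T2‖ + ‖T3‖ + ‖T4‖ := hnorm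
    _ ≤ _ := by rw [hc] at hb1 hb2 hb3 hb4 ⊢; linarith



set_option maxHeartbeats 1000000 in
theorem stmt_9 (k₀ μ ν a b : ℝ) (hk₀ : 0 < k₀) (hμ : 1 < μ) (hν : 0 < ν) :
    ∃ C > (0:ℝ), ∀ u v w : ℕ → ℂ,
      u 0 = 0 → v 0 = 0 → w 0 = 0 →
      Summable (fun n => ‖u n‖ ^ 2) →
      Summable (fun n => (k₀ * μ ^ n) ^ 2 * ‖v n‖ ^ 2) →
      Summable (fun n => ‖w n‖ ^ 2) →
      |goyForm k₀ μ a b u v w|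
        ≤ C * Real.sqrt (∑' n, ‖u n‖ ^ 2)
            * Real.sqrt (∑' n, ν * (k₀ * μ ^ n) ^ 2 * ‖v n‖ ^ 2)
            * Real.sqrt (∑' n, ‖w n‖ ^ 2) := by
  have hμ0 : (0:ℝ) < μ := lt_trans one_pos hμ
  set c : ℝ := (|a| + |b| + 1) * μ with hc
  have hc0 : 0 < c := by positivity
  have hsν : 0 < Real.sqrt ν := Real.sqrt_pos.2 hν
  refine ⟨4 * c / Real.sqrt ν, by positivity, ?_⟩
  intro u v w hu0 hv0 hw0 hu hv hw
  -- notation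
  set P : ℕ → ℝ := fun n => ‖u n‖ with hP
  set Q : ℕ → ℝ := fun n => k₀ * μ ^ n * ‖v n‖ with hQ
  set R : ℕ → ℝ := fun n => ‖w n‖ with hR
  have hP0 : ∀ n, 0 ≤ P n := fun n => norm_nonneg _
  have hQ0 : ∀ n, 0 ≤ Q n := fun n => mul_nonneg (by positivity) (norm_nonneg _)
  have hR0 : ∀ n, 0 ≤ R n := fun n => norm_nonneg _
  have hP2 : Summable (fun n => P n ^ 2) := hu
  have hQ2 : Summable (fun n => Q n ^ 2) :=
    hv.congr fun n => (mul_pow (k₀ * μ ^ n) (‖v n‖) 2).symm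
  have hR2 : Summable (fun n => R n ^ 2) := hw
  set U : ℝ := Real.sqrt (∑' n, P n ^ 2) with hU
  set V : ℝ := Real.sqrt (∑' n, Q n ^ 2) with hV
  set W : ℝ := Real.sqrt (∑' n, R n ^ 2) with hW
  have hPU : ∀ j, P j ≤ U := by
    intro j
    have h1 : P j ^ 2 ≤ ∑' n, P n ^ 2 := Summable.le_tsum hP2 j (fun i _ => sq_nonneg _)
    calc P j = Real.sqrt (P j ^ 2) := (Real.sqrt_sq (hP0 j)).symm
      _ ≤ U := Real.sqrt_le_sqrt h1
  -- shifted sums of squares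
  have hQsq0 : (fun n => Q n ^ 2) 0 = 0 := by simp [hQ, hv0]
  have hQm := tsum_pred_le (fun n => Q n ^ 2) hQsq0 hQ2
  have hVm : Real.sqrt (∑' n, Q (n-1) ^ 2) ≤ V := Real.sqrt_le_sqrt hQm.2
  have hV3 : Real.sqrt (∑' n, Q (n+3) ^ 2) ≤ V :=
    Real.sqrt_le_sqrt (tsum_shift_le (fun n => Q n ^ 2) (fun n => sq_nonneg _) hQ2 3)
  have hV2 : Real.sqrt (∑' n, Q (n+2) ^ 2) ≤ V :=
    Real.sqrt_le_sqrt (tsum_shift_le (fun n => Q n ^ 2) (fun n => sq_nonneg _) hQ2 2)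
  have hW1 : Real.sqrt (∑' n, R (n+1) ^ 2) ≤ W :=
    Real.sqrt_le_sqrt (tsum_shift_le (fun n => R n ^ 2) (fun n => sq_nonneg _) hR2 1)
  have hR21 : Summable (fun n => R (n+1) ^ 2) := (summable_nat_add_iff 1).2 hR2
  have hQ23 : Summable (fun n => Q (n+3) ^ 2) := (summable_nat_add_iff 3).2 hQ2
  have hQ22 : Summable (fun n => Q (n+2) ^ 2) := (summable_nat_add_iff 2).2 hQ2
  -- the four triple sums
  have S1 := triple_tsum (fun n => P (n+2)) (fun n => Q (n+3)) (fun n => R (n+1)) U V W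
    (fun n => hP0 _) (fun n => hQ0 _) (fun n => hR0 _) (fun n => hPU _) hQ23 hR21 hV3 hW1
  have S2 := triple_tsum (fun n => P n) (fun n => Q (n+2)) (fun n => R (n+1)) U V W
    (fun n => hP0 _) (fun n => hQ0 _) (fun n => hR0 _) (fun n => hPU _) hQ22 hR21 hV2 hW1
  have S3 := triple_tsum (fun n => P n) (fun n => Q (n-1)) (fun n => R (n+1)) U V W
    (fun n => hP0 _) (fun n => hQ0 _) (fun n => hR0 _) (fun n => hPU _) hQm.1 hR21 hVm hW1
  have S4 := triple_tsum (fun n => P (n-1)) (fun n => Q n) (fun n => R (n+1)) U V W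
    (fun n => hP0 _) (fun n => hQ0 _) (fun n => hR0 _) (fun n => hPU _) hQ2 hR21
    (le_of_eq rfl) hW1
  -- pointwise bound on the summand
  set z : ℕ → ℂ := fun n => goyB k₀ μ a b u v (n+1) * (starRingEnd ℂ) (w (n+1)) with hz
  have hzb : ∀ n, ‖z n‖ ≤ c * (P (n+2) * Q (n+3) * R (n+1) + P n * Q (n+2) * R (n+1)
      + P n * Q (n-1) * R (n+1) + P (n-1) * Q n * R (n+1)) := by
    intro n
    have h1 : ‖z n‖ = ‖goyB k₀ μ a b u v (n+1)‖ * R (n+1) := by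
      simp [hz, hR, map_mul, Complex.norm_conj]
    rw [h1]
    have h2 := goyB_norm_le k₀ μ a b hk₀ hμ u v n
    calc ‖goyB k₀ μ a b u v (n+1)‖ * R (n+1)
        ≤ (((|a| + |b| + 1) * μ) * (P (n+2) * Q (n+3) + P n * Q (n+2)
            + P n * Q (n-1) + P (n-1) * Q n)) * R (n+1) :=
          mul_le_mul_of_nonneg_right h2 (hR0 _)
      _ = c * (P (n+2) * Q (n+3) * R (n+1) + P n * Q (n+2) * R (n+1)
            + P n * Q (n-1) * R (n+1) + P (n-1) * Q n * R (n+1)) := by rw [hc]; ring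
  have hBsum : Summable (fun n => c * (P (n+2) * Q (n+3) * R (n+1) + P n * Q (n+2) * R (n+1)
      + P n * Q (n-1) * R (n+1) + P (n-1) * Q n * R (n+1))) :=
    (((S1.1.add S2.1).add S3.1).add S4.1).mul_left c
  have hzsum : Summable (fun n => ‖z n‖) :=
    Summable.of_nonneg_of_le (fun n => norm_nonneg _) hzb hBsum
  -- assemble
  have hform : |goyForm k₀ μ a b u v w| ≤ ∑' n, ‖z n‖ := by
    have h3 : ‖∑' n, z n‖ ≤ ∑' n, ‖z n‖ := norm_tsum_le_tsum_norm hzsum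
    calc |goyForm k₀ μ a b u v w| = |(∑' n, z n).re| := rfl
      _ ≤ ‖∑' n, z n‖ := Complex.abs_re_le_norm _
      _ = ‖∑' n, z n‖ := rfl
      _ ≤ ∑' n, ‖z n‖ := h3
  have hmain : ∑' n, ‖z n‖ ≤ c * (4 * (U * V * W)) := by
    calc ∑' n, ‖z n‖
        ≤ ∑' n, c * (P (n+2) * Q (n+3) * R (n+1) + P n * Q (n+2) * R (n+1)
            + P n * Q (n-1) * R (n+1) + P (n-1) * Q n * R (n+1)) :=
          Summable.tsum_le_tsum hzb hzsum hBsum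
      _ = c * ((∑' n, P (n+2) * Q (n+3) * R (n+1)) + (∑' n, P n * Q (n+2) * R (n+1))
            + (∑' n, P n * Q (n-1) * R (n+1)) + (∑' n, P (n-1) * Q n * R (n+1))) := by
          rw [tsum_mul_left, Summable.tsum_add ((S1.1.add S2.1).add S3.1) S4.1,
            Summable.tsum_add (S1.1.add S2.1) S3.1, Summable.tsum_add S1.1 S2.1]
      _ ≤ c * (U * V * W + U * V * W + U * V * W + U * V * W) := by
          apply mul_le_mul_of_nonneg_left _ hc0.le
          linarith [S1.2, S2.2, S3.2, S4.2]
      _ = c * (4 * (U * V * W)) := by ring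
  -- rewrite the middle sqrt
  have hmid : Real.sqrt (∑' n, ν * (k₀ * μ ^ n) ^ 2 * ‖v n‖ ^ 2)
      = Real.sqrt ν * V := by
    have h4 : (∑' n, ν * (k₀ * μ ^ n) ^ 2 * ‖v n‖ ^ 2)
        = ν * ∑' n, Q n ^ 2 := by
      rw [← tsum_mul_left]
      exact tsum_congr fun n => by simp only [hQ]; ring
    rw [h4, Real.sqrt_mul hν.le, hV]
  rw [hmid]
  have hfin : 4 * c / Real.sqrt ν * U * (Real.sqrt ν * V) * W = c * (4 * (U * V * W)) := by
    field_simp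
  rw [hfin]
  exact hform.trans hmain
end

section
/- For the GOY shell model bilinear map B as above, the antisymmetry ⟨B(u,v),w⟩ = −⟨B(u,w),v⟩ holds for all u, v, w in Dom(A^{1/2}); in particular ⟨B(u,v),v⟩ = 0. -/
set_option maxHeartbeats 1000000

lemma summable_of_l2 {f : ℕ → ℂ} {U X : ℕ → ℝ} (hU : Summable fun n => U n ^ 2)
    (hX : Summable fun n => X n ^ 2) (C : ℝ) (hC : 0 ≤ C) (i j : ℕ)
    (hf : ∀ n, ‖f n‖ ≤ C * (U (n + i) * X (n + j))) : Summable f := by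
  have hUs : Summable fun n => U (n + i) ^ 2 := (summable_nat_add_iff i).2 hU
  have hXs : Summable fun n => X (n + j) ^ 2 := (summable_nat_add_iff j).2 hX
  refine Summable.of_norm ?_
  refine Summable.of_nonneg_of_le (fun n => norm_nonneg _) (fun n => ?_)
    ((hUs.add hXs).mul_left (C / 2))
  calc ‖f n‖ ≤ C * (U (n + i) * X (n + j)) := hf n
    _ ≤ C / 2 * (U (n + i) ^ 2 + X (n + j) ^ 2) := by
        nlinarith [mul_nonneg hC (sq_nonneg (U (n + i) - X (n + j)))]




noncomputable def tA1 (k₀ μ a : ℝ) (u x y : ℕ → ℂ) (n : ℕ) : ℂ :=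
  (↑(a * (k₀ * μ ^ (n+2))) : ℂ) * (starRingEnd ℂ) (u (n+2)) * (starRingEnd ℂ) (x (n+3)) *
    (starRingEnd ℂ) (y (n+1))

noncomputable def tB1 (k₀ μ b : ℝ) (u x y : ℕ → ℂ) (n : ℕ) : ℂ :=
  (↑(b * (k₀ * μ ^ (n+1))) : ℂ) * (starRingEnd ℂ) (u n) * (starRingEnd ℂ) (x (n+2)) *
    (starRingEnd ℂ) (y (n+1))

noncomputable def tA2 (k₀ μ a : ℝ) (u x y : ℕ → ℂ) (n : ℕ) : ℂ :=
  (↑(a * (k₀ * μ ^ n)) : ℂ) * (starRingEnd ℂ) (u n) * (starRingEnd ℂ) (x (n-1)) *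
    (starRingEnd ℂ) (y (n+1))

noncomputable def tB2 (k₀ μ b : ℝ) (u x y : ℕ → ℂ) (n : ℕ) : ℂ :=
  (↑(b * (k₀ * μ ^ n)) : ℂ) * (starRingEnd ℂ) (u (n-1)) * (starRingEnd ℂ) (x n) *
    (starRingEnd ℂ) (y (n+1))

lemma goyB_succ_mul (k₀ μ a b : ℝ) (u x y : ℕ → ℂ) (n : ℕ) :
    goyB k₀ μ a b u x (n+1) * (starRingEnd ℂ) (y (n+1)) =
    -Complex.I * (tA1 k₀ μ a u x y n + tB1 k₀ μ b u x y n
      - tA2 k₀ μ a u x y n - tB2 k₀ μ b u x y n) := by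
  have h1 : n + 1 - 1 = n := rfl
  have h2 : n + 1 - 2 = n - 1 := rfl
  have h3 : n + 1 + 1 = n + 2 := rfl
  have h4 : n + 1 + 2 = n + 3 := rfl
  simp only [goyB, tA1, tB1, tA2, tB2, h1, h2, h3, h4]
  ring

lemma tA2_shift (k₀ μ a : ℝ) (u x y : ℕ → ℂ) (n : ℕ) :
    tA2 k₀ μ a u y x (n+2) = tA1 k₀ μ a u x y n := by
  have h1 : n + 2 - 1 = n + 1 := rfl
  simp only [tA2, tA1, h1]
  ring

lemma tB2_shift (k₀ μ b : ℝ) (u x y : ℕ → ℂ) (n : ℕ) :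
    tB2 k₀ μ b u y x (n+1) = tB1 k₀ μ b u x y n := by
  have h1 : n + 1 - 1 = n := rfl
  simp only [tB2, tB1, h1]
  ring

lemma abs_le_of_l2 (k₀ μ : ℝ) (hk₀ : 0 < k₀) (hμ : 1 < μ) (u : ℕ → ℂ)
    (hu : Summable fun n => (k₀ * μ ^ n) ^ 2 * ‖u n‖ ^ 2) :
    ∃ C, 0 ≤ C ∧ ∀ n, ‖u n‖ ≤ C := by
  refine ⟨Real.sqrt (∑' n, (k₀ * μ ^ n) ^ 2 * ‖u n‖ ^ 2) / k₀,
    by positivity, fun n => ?_⟩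
  rw [le_div_iff₀ hk₀]
  have h1 : (‖u n‖ * k₀) ^ 2 ≤ ∑' n, (k₀ * μ ^ n) ^ 2 * ‖u n‖ ^ 2 := by
    have h2 : (k₀ * μ ^ n) ^ 2 * ‖u n‖ ^ 2
        ≤ ∑' n, (k₀ * μ ^ n) ^ 2 * ‖u n‖ ^ 2 :=
      Summable.le_tsum hu n fun m _ => by positivity
    have h3 : (1:ℝ) ≤ μ ^ n := one_le_pow₀ hμ.le
    have h3' : k₀ ≤ k₀ * μ ^ n := by nlinarith
    have h4 : k₀ ^ 2 ≤ (k₀ * μ ^ n) ^ 2 := by nlinarith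
    nlinarith [sq_nonneg (‖u n‖)]
  calc ‖u n‖ * k₀ = Real.sqrt ((‖u n‖ * k₀)^2) :=
        (Real.sqrt_sq (by positivity)).symm
    _ ≤ _ := Real.sqrt_le_sqrt h1

lemma one_le_K (k₀ μ : ℝ) (hk₀ : 0 < k₀) (hμ : 1 < μ) (n : ℕ) : k₀ ≤ k₀ * μ ^ n := by
  have h3 : (1:ℝ) ≤ μ ^ n := one_le_pow₀ hμ.le
  nlinarith

lemma summable_tA1 (k₀ μ a : ℝ) (hk₀ : 0 < k₀) (hμ : 1 < μ) (u x y : ℕ → ℂ)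
    (hu : Summable fun n => (k₀ * μ ^ n) ^ 2 * ‖u n‖ ^ 2)
    (hx : Summable fun n => (k₀ * μ ^ n) ^ 2 * ‖x n‖ ^ 2)
    (hy : Summable fun n => (k₀ * μ ^ n) ^ 2 * ‖y n‖ ^ 2) :
    Summable (tA1 k₀ μ a u x y) := by
  obtain ⟨Cy, hCy0, hCy⟩ := abs_le_of_l2 k₀ μ hk₀ hμ y hy
  have hU2 : Summable fun n => (k₀ * μ ^ n * ‖u n‖) ^ 2 := by
    simpa [mul_pow] using hu
  have hX2 : Summable fun n => (k₀ * μ ^ n * ‖x n‖) ^ 2 := by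
    simpa [mul_pow] using hx
  refine summable_of_l2 hU2 hX2 (|a| * Cy / k₀) (by positivity) 2 3 (fun n => ?_)
  rw [div_mul_eq_mul_div, le_div_iff₀ hk₀]
  have habs : ‖tA1 k₀ μ a u x y n‖
      = |a| * (k₀ * μ ^ (n+2)) * ‖u (n+2)‖ * ‖x (n+3)‖
        * ‖y (n+1)‖ := by
    have hp : |k₀ * μ ^ (n+2)| = k₀ * μ ^ (n+2) := abs_of_pos (by positivity)
    simp only [tA1, norm_mul, Complex.norm_conj, Complex.norm_real, Real.norm_eq_abs]
    rw [← abs_mul, hp]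
  rw [habs]
  have h1 : ‖y (n+1)‖ * k₀ ≤ Cy * (k₀ * μ ^ (n+3)) := by
    have := one_le_K k₀ μ hk₀ hμ (n+3)
    nlinarith [hCy (n+1), norm_nonneg (y (n+1))]
  have h2 := mul_le_mul_of_nonneg_left h1
    (show (0:ℝ) ≤ |a| * (k₀ * μ ^ (n+2)) * ‖u (n+2)‖ * ‖x (n+3)‖
      by positivity)
  nlinarith [h2]

lemma summable_tB1 (k₀ μ b : ℝ) (hk₀ : 0 < k₀) (hμ : 1 < μ) (u x y : ℕ → ℂ)
    (hu : Summable fun n => (k₀ * μ ^ n) ^ 2 * ‖u n‖ ^ 2)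
    (hx : Summable fun n => (k₀ * μ ^ n) ^ 2 * ‖x n‖ ^ 2)
    (hy : Summable fun n => (k₀ * μ ^ n) ^ 2 * ‖y n‖ ^ 2) :
    Summable (tB1 k₀ μ b u x y) := by
  obtain ⟨Cy, hCy0, hCy⟩ := abs_le_of_l2 k₀ μ hk₀ hμ y hy
  have hμ0 : (0:ℝ) < μ := lt_trans one_pos hμ
  have hU2 : Summable fun n => (k₀ * μ ^ n * ‖u n‖) ^ 2 := by
    simpa [mul_pow] using hu
  have hX2 : Summable fun n => (k₀ * μ ^ n * ‖x n‖) ^ 2 := by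
    simpa [mul_pow] using hx
  refine summable_of_l2 hU2 hX2 (|b| * μ * Cy / k₀) (by positivity) 0 2 (fun n => ?_)
  simp only [Nat.add_zero]
  rw [div_mul_eq_mul_div, le_div_iff₀ hk₀]
  have habs : ‖tB1 k₀ μ b u x y n‖
      = |b| * (k₀ * μ ^ (n+1)) * ‖u n‖ * ‖x (n+2)‖
        * ‖y (n+1)‖ := by
    have hp : |k₀ * μ ^ (n+1)| = k₀ * μ ^ (n+1) := abs_of_pos (by positivity)
    simp only [tB1, norm_mul, Complex.norm_conj, Complex.norm_real, Real.norm_eq_abs]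
    rw [← abs_mul, hp]
  rw [habs]
  have h1 : ‖y (n+1)‖ * k₀ ≤ Cy * (k₀ * μ ^ (n+2)) := by
    have := one_le_K k₀ μ hk₀ hμ (n+2)
    nlinarith [hCy (n+1), norm_nonneg (y (n+1))]
  have h2 := mul_le_mul_of_nonneg_left h1
    (show (0:ℝ) ≤ |b| * (k₀ * μ ^ (n+1)) * ‖u n‖ * ‖x (n+2)‖
      by positivity)
  calc |b| * (k₀ * μ ^ (n+1)) * ‖u n‖ * ‖x (n+2)‖
        * ‖y (n+1)‖ * k₀
      = |b| * (k₀ * μ ^ (n+1)) * ‖u n‖ * ‖x (n+2)‖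
        * (‖y (n+1)‖ * k₀) := by ring
    _ ≤ |b| * (k₀ * μ ^ (n+1)) * ‖u n‖ * ‖x (n+2)‖
        * (Cy * (k₀ * μ ^ (n+2))) := h2
    _ = |b| * μ * Cy * (k₀ * μ ^ n * ‖u n‖
        * (k₀ * μ ^ (n+2) * ‖x (n+2)‖)) := by ring

lemma summable_tA2 (k₀ μ a : ℝ) (hk₀ : 0 < k₀) (hμ : 1 < μ) (u x y : ℕ → ℂ)
    (hu : Summable fun n => (k₀ * μ ^ n) ^ 2 * ‖u n‖ ^ 2)
    (hx : Summable fun n => (k₀ * μ ^ n) ^ 2 * ‖x n‖ ^ 2)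
    (hy : Summable fun n => (k₀ * μ ^ n) ^ 2 * ‖y n‖ ^ 2) :
    Summable (tA2 k₀ μ a u x y) := by
  obtain ⟨Cx, hCx0, hCx⟩ := abs_le_of_l2 k₀ μ hk₀ hμ x hx
  have hU2 : Summable fun n => (k₀ * μ ^ n * ‖u n‖) ^ 2 := by
    simpa [mul_pow] using hu
  have hY2 : Summable fun n => (k₀ * μ ^ n * ‖y n‖) ^ 2 := by
    simpa [mul_pow] using hy
  refine summable_of_l2 hU2 hY2 (|a| * Cx / k₀) (by positivity) 0 1 (fun n => ?_)
  simp only [Nat.add_zero]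
  rw [div_mul_eq_mul_div, le_div_iff₀ hk₀]
  have habs : ‖tA2 k₀ μ a u x y n‖
      = |a| * (k₀ * μ ^ n) * ‖u n‖ * ‖x (n-1)‖
        * ‖y (n+1)‖ := by
    have hp : |k₀ * μ ^ n| = k₀ * μ ^ n := abs_of_pos (by positivity)
    simp only [tA2, norm_mul, Complex.norm_conj, Complex.norm_real, Real.norm_eq_abs]
    rw [← abs_mul, hp]
  rw [habs]
  have h1 : ‖x (n-1)‖ * k₀ ≤ Cx * (k₀ * μ ^ (n+1)) := by
    have := one_le_K k₀ μ hk₀ hμ (n+1)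
    nlinarith [hCx (n-1), norm_nonneg (x (n-1))]
  have h2 := mul_le_mul_of_nonneg_left h1
    (show (0:ℝ) ≤ |a| * (k₀ * μ ^ n) * ‖u n‖ * ‖y (n+1)‖
      by positivity)
  nlinarith [h2]

lemma summable_tB2 (k₀ μ b : ℝ) (hk₀ : 0 < k₀) (hμ : 1 < μ) (u x y : ℕ → ℂ)
    (hu : Summable fun n => (k₀ * μ ^ n) ^ 2 * ‖u n‖ ^ 2)
    (hx : Summable fun n => (k₀ * μ ^ n) ^ 2 * ‖x n‖ ^ 2)
    (hy : Summable fun n => (k₀ * μ ^ n) ^ 2 * ‖y n‖ ^ 2) :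
    Summable (tB2 k₀ μ b u x y) := by
  obtain ⟨Cu, hCu0, hCu⟩ := abs_le_of_l2 k₀ μ hk₀ hμ u hu
  have hX2 : Summable fun n => (k₀ * μ ^ n * ‖x n‖) ^ 2 := by
    simpa [mul_pow] using hx
  have hY2 : Summable fun n => (k₀ * μ ^ n * ‖y n‖) ^ 2 := by
    simpa [mul_pow] using hy
  refine summable_of_l2 hX2 hY2 (|b| * Cu / k₀) (by positivity) 0 1 (fun n => ?_)
  simp only [Nat.add_zero]
  rw [div_mul_eq_mul_div, le_div_iff₀ hk₀]
  have habs : ‖tB2 k₀ μ b u x y n‖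
      = |b| * (k₀ * μ ^ n) * ‖u (n-1)‖ * ‖x n‖
        * ‖y (n+1)‖ := by
    have hp : |k₀ * μ ^ n| = k₀ * μ ^ n := abs_of_pos (by positivity)
    simp only [tB2, norm_mul, Complex.norm_conj, Complex.norm_real, Real.norm_eq_abs]
    rw [← abs_mul, hp]
  rw [habs]
  have h1 : ‖u (n-1)‖ * k₀ ≤ Cu * (k₀ * μ ^ (n+1)) := by
    have := one_le_K k₀ μ hk₀ hμ (n+1)
    nlinarith [hCu (n-1), norm_nonneg (u (n-1))]
  have h2 := mul_le_mul_of_nonneg_left h1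
    (show (0:ℝ) ≤ |b| * (k₀ * μ ^ n) * ‖x n‖ * ‖y (n+1)‖
      by positivity)
  nlinarith [h2]


lemma goy_anti (k₀ μ a b : ℝ) (hk₀ : 0 < k₀) (hμ : 1 < μ)
    (u x y : ℕ → ℂ) (hu0 : u 0 = 0) (hx0 : x 0 = 0) (hy0 : y 0 = 0)
    (hu : Summable fun n => (k₀ * μ ^ n) ^ 2 * ‖u n‖ ^ 2)
    (hx : Summable fun n => (k₀ * μ ^ n) ^ 2 * ‖x n‖ ^ 2)
    (hy : Summable fun n => (k₀ * μ ^ n) ^ 2 * ‖y n‖ ^ 2) :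
    goyForm k₀ μ a b u x y = - goyForm k₀ μ a b u y x := by
  have sA1 := summable_tA1 k₀ μ a hk₀ hμ u x y hu hx hy
  have sB1 := summable_tB1 k₀ μ b hk₀ hμ u x y hu hx hy
  have sA2 := summable_tA2 k₀ μ a hk₀ hμ u x y hu hx hy
  have sB2 := summable_tB2 k₀ μ b hk₀ hμ u x y hu hx hy
  have sA1' := summable_tA1 k₀ μ a hk₀ hμ u y x hu hy hx
  have sB1' := summable_tB1 k₀ μ b hk₀ hμ u y x hu hy hx
  have sA2' := summable_tA2 k₀ μ a hk₀ hμ u y x hu hy hx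
  have sB2' := summable_tB2 k₀ μ b hk₀ hμ u y x hu hy hx
  -- shifted-sum identities
  have eA : ∑' n, tA1 k₀ μ a u x y n = ∑' n, tA2 k₀ μ a u y x n := by
    have h0 : tA2 k₀ μ a u y x 0 = 0 := by simp [tA2, hu0]
    have h1 : tA2 k₀ μ a u y x (0+1) = 0 := by simp [tA2, hy0]
    calc ∑' n, tA1 k₀ μ a u x y n = ∑' n, tA2 k₀ μ a u y x (n+1+1) :=
          tsum_congr fun n => (tA2_shift k₀ μ a u x y n).symm
      _ = ∑' n, tA2 k₀ μ a u y x n := by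
          rw [Summable.tsum_eq_zero_add sA2', Summable.tsum_eq_zero_add ((summable_nat_add_iff 1).2 sA2'),
            h0, h1]
          simp
  have eA' : ∑' n, tA1 k₀ μ a u y x n = ∑' n, tA2 k₀ μ a u x y n := by
    have h0 : tA2 k₀ μ a u x y 0 = 0 := by simp [tA2, hu0]
    have h1 : tA2 k₀ μ a u x y (0+1) = 0 := by simp [tA2, hx0]
    calc ∑' n, tA1 k₀ μ a u y x n = ∑' n, tA2 k₀ μ a u x y (n+1+1) :=
          tsum_congr fun n => (tA2_shift k₀ μ a u y x n).symm
      _ = ∑' n, tA2 k₀ μ a u x y n := by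
          rw [Summable.tsum_eq_zero_add sA2, Summable.tsum_eq_zero_add ((summable_nat_add_iff 1).2 sA2),
            h0, h1]
          simp
  have eB : ∑' n, tB1 k₀ μ b u x y n = ∑' n, tB2 k₀ μ b u y x n := by
    have h0 : tB2 k₀ μ b u y x 0 = 0 := by simp [tB2, hu0]
    calc ∑' n, tB1 k₀ μ b u x y n = ∑' n, tB2 k₀ μ b u y x (n+1) :=
          tsum_congr fun n => (tB2_shift k₀ μ b u x y n).symm
      _ = ∑' n, tB2 k₀ μ b u y x n := by
          rw [Summable.tsum_eq_zero_add sB2', h0]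
          simp
  have eB' : ∑' n, tB1 k₀ μ b u y x n = ∑' n, tB2 k₀ μ b u x y n := by
    have h0 : tB2 k₀ μ b u x y 0 = 0 := by simp [tB2, hu0]
    calc ∑' n, tB1 k₀ μ b u y x n = ∑' n, tB2 k₀ μ b u x y (n+1) :=
          tsum_congr fun n => (tB2_shift k₀ μ b u y x n).symm
      _ = ∑' n, tB2 k₀ μ b u x y n := by
          rw [Summable.tsum_eq_zero_add sB2, h0]
          simp
  -- decompose the two forms
  have S1eq : (∑' n : ℕ, goyB k₀ μ a b u x (n+1) * (starRingEnd ℂ) (y (n+1)))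
      = -Complex.I * ((∑' n, tA1 k₀ μ a u x y n) + (∑' n, tB1 k₀ μ b u x y n)
        - (∑' n, tA2 k₀ μ a u x y n) - (∑' n, tB2 k₀ μ b u x y n)) := by
    rw [show (fun n : ℕ => goyB k₀ μ a b u x (n+1) * (starRingEnd ℂ) (y (n+1)))
        = fun n => -Complex.I * (tA1 k₀ μ a u x y n + tB1 k₀ μ b u x y n
          - tA2 k₀ μ a u x y n - tB2 k₀ μ b u x y n) from
      funext fun n => goyB_succ_mul k₀ μ a b u x y n]
    rw [tsum_mul_left, Summable.tsum_sub ((sA1.add sB1).sub sA2) sB2,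
      Summable.tsum_sub (sA1.add sB1) sA2, Summable.tsum_add sA1 sB1]
  have S2eq : (∑' n : ℕ, goyB k₀ μ a b u y (n+1) * (starRingEnd ℂ) (x (n+1)))
      = -Complex.I * ((∑' n, tA1 k₀ μ a u y x n) + (∑' n, tB1 k₀ μ b u y x n)
        - (∑' n, tA2 k₀ μ a u y x n) - (∑' n, tB2 k₀ μ b u y x n)) := by
    rw [show (fun n : ℕ => goyB k₀ μ a b u y (n+1) * (starRingEnd ℂ) (x (n+1)))
        = fun n => -Complex.I * (tA1 k₀ μ a u y x n + tB1 k₀ μ b u y x n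
          - tA2 k₀ μ a u y x n - tB2 k₀ μ b u y x n) from
      funext fun n => goyB_succ_mul k₀ μ a b u y x n]
    rw [tsum_mul_left, Summable.tsum_sub ((sA1'.add sB1').sub sA2') sB2',
      Summable.tsum_sub (sA1'.add sB1') sA2', Summable.tsum_add sA1' sB1']
  have key : (∑' n : ℕ, goyB k₀ μ a b u x (n+1) * (starRingEnd ℂ) (y (n+1)))
      = -(∑' n : ℕ, goyB k₀ μ a b u y (n+1) * (starRingEnd ℂ) (x (n+1))) := by
    rw [S1eq, S2eq, eA, eB, eA', eB']
    ring
  unfold goyForm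
  rw [key, Complex.neg_re]

theorem stmt_10 (k₀ μ a b : ℝ) (hk₀ : 0 < k₀) (hμ : 1 < μ)
    (u v w : ℕ → ℂ) (hu0 : u 0 = 0) (hv0 : v 0 = 0) (hw0 : w 0 = 0)
    (hu : Summable (fun n => (k₀ * μ ^ n) ^ 2 * ‖u n‖ ^ 2))
    (hv : Summable (fun n => (k₀ * μ ^ n) ^ 2 * ‖v n‖ ^ 2))
    (hw : Summable (fun n => (k₀ * μ ^ n) ^ 2 * ‖w n‖ ^ 2)) :
    goyForm k₀ μ a b u v w = - goyForm k₀ μ a b u w v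
    ∧ goyForm k₀ μ a b u v v = 0 := by
  refine ⟨goy_anti k₀ μ a b hk₀ hμ u v w hu0 hv0 hw0 hu hv hw, ?_⟩
  have h := goy_anti k₀ μ a b hk₀ hμ u v v hu0 hv0 hv0 hu hv hv
  linarith
end
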